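/- arXiv:2402.02693 — 2 statements merged into one kernel-verified Lean document; each statement's English description precedes it below -/
import Mathlib

section
/- Let λ be a limit ordinal, let j be a strictly increasing function from the ordinals below λ to the ordinals, and set δ := sup{j(ξ) : ξ < λ}. Let C be a set of ordinals below δ that is closed below δ, i.e., whenever s ⊆ C is nonempty, sup s < δ, and sup s is a limit of elements of s, then sup s ∈ C. Let D ⊆ {ξ : ξ < λ} be unbounded in λ and such that for all ξ₀ < ξ₁ with ξ₀, ξ₁ ∈ D there exists γ ∈ C with j(ξ₀) ≤ γ ≤ j(ξ₁). Then for every η < λ such that η is a limit point of D (i.e., D ∩ η is unbounded in η and η is a limit ordinal) and such that j(η) = sup{j(ξ) : ξ < η}, we have j(η) ∈ C. -/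
/-- `η` is a limit point of the set of ordinals `A`:
`η` is a limit ordinal and `A ∩ η` is unbounded in `η`. -/
def IsLimitPointOf (A : Set Ordinal) (η : Ordinal) : Prop :=
  Order.IsSuccLimit η ∧ ∀ γ < η, ∃ x ∈ A, γ < x ∧ x < η

/-- If `C ⊆ δ := sup (j '' (Iio lam))` is closed below `δ`, `D ⊆ lam` is
unbounded in `lam` and any two `j`-values of points of `D` have a point of `C` in between,
then for every limit point `η < lam` of `D` at which `j` is continuous, `j η ∈ C`. -/
theorem limit_point_image_mem_closed (lam : Ordinal) (hlam : Order.IsSuccLimit lam)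
    (j : Ordinal → Ordinal)
    (hmono : ∀ ξ₀ ξ₁ : Ordinal, ξ₀ < ξ₁ → ξ₁ < lam → j ξ₀ < j ξ₁)
    (C : Set Ordinal)
    (hCsub : C ⊆ Set.Iio (sSup (j '' Set.Iio lam)))
    (hCclosed : ∀ s ⊆ C, s.Nonempty → sSup s < sSup (j '' Set.Iio lam) →
      (∀ γ < sSup s, ∃ x ∈ s, γ < x ∧ x < sSup s) → sSup s ∈ C)
    (D : Set Ordinal) (hD : D ⊆ Set.Iio lam)
    (hDunb : ∀ γ < lam, ∃ ξ ∈ D, γ < ξ)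
    (hhit : ∀ ξ₀ ∈ D, ∀ ξ₁ ∈ D, ξ₀ < ξ₁ → ∃ γ ∈ C, j ξ₀ ≤ γ ∧ γ ≤ j ξ₁) :
    ∀ η < lam, IsLimitPointOf D η → j η = sSup (j '' Set.Iio η) → j η ∈ C := by
  intro η hηlam ⟨hηlim, hηlp⟩ hcont
  set δ := sSup (j '' Set.Iio lam) with hδ
  -- j η < δ
  by_cases hbdd : BddAbove (j '' Set.Iio lam)
  case neg =>
    exfalso
    have hδ0 : δ = 0 := by
      rw [hδ, csSup_of_not_bddAbove hbdd, csSup_empty]; rfl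
    obtain ⟨ξ₀, hξ₀D, _⟩ := hDunb 0 hlam.pos
    obtain ⟨ξ₁, hξ₁D, hlt⟩ := hDunb ξ₀ (hD hξ₀D)
    obtain ⟨γ, hγC, _, _⟩ := hhit ξ₀ hξ₀D ξ₁ hξ₁D hlt
    have := hCsub hγC
    rw [hδ0] at this
    exact absurd this (by simp)
  obtain ⟨ξ', hξ'D, hηξ'⟩ := hDunb η hηlam
  have hξ'lam : ξ' < lam := hD hξ'D
  have hjηδ : j η < δ :=
    lt_of_lt_of_le (hmono η ξ' hηξ' hξ'lam)
      (le_csSup hbdd ⟨ξ', hξ'lam, rfl⟩)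
  -- key unboundedness: for any β < j η there is γ ∈ C with β < γ < j η
  have key : ∀ β < j η, ∃ γ ∈ C, β < γ ∧ γ < j η := by
    intro β hβ
    rw [hcont] at hβ
    have hne : (j '' Set.Iio η).Nonempty := ⟨j 0, 0, hηlim.pos, rfl⟩
    obtain ⟨x, ⟨ξ, hξη, rfl⟩, hβx⟩ := exists_lt_of_lt_csSup hne hβ
    obtain ⟨ξ₀, hξ₀D, hξξ₀, hξ₀η⟩ := hηlp ξ hξη
    obtain ⟨ξ₁, hξ₁D, hξ₀ξ₁, hξ₁η⟩ := hηlp ξ₀ hξ₀η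
    obtain ⟨γ, hγC, h0γ, hγ1⟩ := hhit ξ₀ hξ₀D ξ₁ hξ₁D hξ₀ξ₁
    refine ⟨γ, hγC, ?_, ?_⟩
    · exact lt_of_lt_of_le (hβx.trans (hmono ξ ξ₀ hξξ₀ (hξ₀η.trans hηlam))) h0γ
    · exact lt_of_le_of_lt hγ1 (hmono ξ₁ η hξ₁η hηlam)
  -- the witnessing set
  set s := C ∩ Set.Iio (j η) with hs
  have hsC : s ⊆ C := Set.inter_subset_left
  have hsne : s.Nonempty := by
    obtain ⟨γ, hγC, _, hγη⟩ := key (j 0) (hmono 0 η hηlim.pos hηlam)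
    exact ⟨γ, hγC, hγη⟩
  have hsbdd : BddAbove s := ⟨j η, fun x hx => le_of_lt hx.2⟩
  have hsup : sSup s = j η := by
    refine le_antisymm (csSup_le hsne fun x hx => le_of_lt hx.2) ?_
    by_contra h
    push_neg at h
    obtain ⟨γ, hγC, hlt, hγη⟩ := key (sSup s) h
    exact absurd (le_csSup hsbdd (⟨hγC, hγη⟩ : γ ∈ s)) (not_le.mpr hlt)
  have := hCclosed s hsC hsne (hsup ▸ hjηδ) ?_
  · rwa [hsup] at this
  · intro γ hγ
    rw [hsup] at hγ
    obtain ⟨x, hxC, hγx, hxη⟩ := key γ hγ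
    exact ⟨x, ⟨hxC, hxη⟩, hγx, hsup ▸ hxη⟩
end

section
/- Let λ be an ordinal and let j be a strictly increasing function from the ordinals below λ to the ordinals such that j(η) = sup{j(ξ) : ξ < η} for every ordinal η < λ of cofinality ω. Let E ⊆ {ξ : ξ < λ}, and let θ be an ordinal of cofinality ω such that θ is a limit point of j''E = {j(ξ) : ξ ∈ E} (i.e., j''E ∩ θ is unbounded in θ and θ is a limit ordinal) and such that θ ≤ j(ζ₀) for some ζ₀ < λ. Then there exists ζ < λ such that ζ is a limit point of E, ζ has cofinality ω, and j(ζ) = θ. -/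
universe u

private noncomputable def lsub0 {ι : Type u} (e : ι → Ordinal.{u}) : Ordinal.{u} := Ordinal.lsub.{u,u} e

private theorem lt_lsub0 {ι : Type u} (e : ι → Ordinal.{u}) (i : ι) : e i < lsub0 e :=
  Ordinal.lt_lsub e i

private theorem lsub0_le {ι : Type u} {e : ι → Ordinal.{u}} {a : Ordinal.{u}}
    (h : ∀ i, e i < a) : lsub0 e ≤ a := Ordinal.lsub_le h

private theorem lt_lsub0_iff {ι : Type u} {e : ι → Ordinal.{u}} {a : Ordinal.{u}} :
    a < lsub0 e ↔ ∃ i, a ≤ e i := Ordinal.lt_lsub_iff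

private theorem cof_lsub0_le {ι : Type u} (e : ι → Ordinal.{u}) :
    (lsub0 e).cof ≤ Cardinal.mk ι := Ordinal.cof_lsub_le e

private theorem exists_lsub0_cof (o : Ordinal.{u}) :
    ∃ (ι : Type u) (f : ι → Ordinal.{u}), lsub0 f = o ∧ Cardinal.mk ι = o.cof :=
  Ordinal.exists_lsub_cof o

/-- If `j` is strictly increasing below `lam` and continuous at points of
cofinality `ω`, then every ω-cofinal limit point `θ` of `j '' E` lying below some `j`-value
is itself of the form `j ζ` for an ω-cofinal limit point `ζ` of `E`. -/
theorem omega_cofinal_limit_point_of_image (lam : Ordinal) (j : Ordinal → Ordinal)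
    (hmono : ∀ ξ₀ ξ₁ : Ordinal, ξ₀ < ξ₁ → ξ₁ < lam → j ξ₀ < j ξ₁)
    (hcont : ∀ η < lam, η.cof = Cardinal.aleph0 → j η = sSup (j '' Set.Iio η))
    (E : Set Ordinal) (hE : E ⊆ Set.Iio lam)
    (θ : Ordinal) (hθcof : θ.cof = Cardinal.aleph0)
    (hθlp : IsLimitPointOf (j '' E) θ)
    (ζ₀ : Ordinal) (hζ₀ : ζ₀ < lam) (hθle : θ ≤ j ζ₀) :
    ∃ ζ < lam, IsLimitPointOf E ζ ∧ ζ.cof = Cardinal.aleph0 ∧ j ζ = θ := by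
  set S : Set Ordinal := {ξ | θ ≤ j ξ} with hS
  have hSne : S.Nonempty := ⟨ζ₀, hθle⟩
  set ζ : Ordinal := sInf S with hζdef
  have hζS : θ ≤ j ζ := csInf_mem hSne
  have hζle : ζ ≤ ζ₀ := csInf_le' hθle
  have hζlam : ζ < lam := lt_of_le_of_lt hζle hζ₀
  -- below ζ, j is below θ
  have hmin : ∀ γ < ζ, j γ < θ := by
    intro γ hγ
    by_contra h
    have h2 : ζ ≤ γ := csInf_le' (show θ ≤ j γ from not_lt.1 h)
    exact absurd h2 (not_le.2 hγ)
  -- elements of E mapped below θ are below ζ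
  have hxlt : ∀ x ∈ E, j x < θ → x < ζ := by
    intro x hx hjx
    by_contra h
    rcases eq_or_lt_of_le (not_lt.1 h) with he | hl
    · exact absurd (he ▸ hζS) (not_le.2 hjx)
    · exact absurd ((hζS.trans (hmono ζ x hl (hE hx)).le) : θ ≤ j x) (not_le.2 hjx)
  -- from j γ < j x with x ∈ E, γ arbitrary, conclude γ < x (needs γ < lam)
  have hrev : ∀ γ < lam, ∀ x ∈ E, j γ < j x → γ < x := by
    intro γ hγ x hx hjj
    by_contra h
    rcases eq_or_lt_of_le (not_lt.1 h) with he | hl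
    · exact absurd (he ▸ hjj) (lt_irrefl _)
    · exact absurd (hmono x γ hl hγ) (not_lt.2 hjj.le)
  -- for any γ < ζ, find x ∈ E with γ < x < ζ
  have hub : ∀ γ < ζ, ∃ x ∈ E, γ < x ∧ x < ζ := by
    intro γ hγ
    obtain ⟨y, ⟨x, hxE, rfl⟩, hgy, hyθ⟩ := hθlp.2 (j γ) (hmin γ hγ)
    exact ⟨x, hxE, hrev γ (hγ.trans hζlam) x hxE hgy, hxlt x hxE hyθ⟩
  -- ζ is a limit ordinal
  have hζlim : Order.IsSuccLimit ζ := by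
    refine Ordinal.isSuccLimit_iff.2 ⟨?_, Order.isSuccPrelimit_of_succ_lt ?_⟩
    · intro h0
      obtain ⟨y, ⟨x, hxE, rfl⟩, _, hyθ⟩ := hθlp.2 0 hθlp.1.pos
      exact (not_lt_zero (a := x)) (h0 ▸ hxlt x hxE hyθ)
    · intro γ hγ
      obtain ⟨x, hxE, hgx, hxζ⟩ := hub γ hγ
      exact lt_of_le_of_lt (Order.succ_le_of_lt hgx) hxζ
  -- cofinality: build an ω-indexed family in E cofinal in ζ
  obtain ⟨ι, f0, hlsub, hι⟩ := exists_lsub0_cof θ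
  rw [hθcof] at hι
  have hcnt : Countable ι := Cardinal.mk_le_aleph0_iff.1 hι.le
  have hne : Nonempty ι :=
    Cardinal.mk_ne_zero_iff.1 (by rw [hι]; exact Cardinal.aleph0_ne_zero)
  obtain ⟨g, hg⟩ := exists_surjective_nat ι
  set f : ℕ → Ordinal := fun k => f0 (g k) with hfdef
  have hfθ : ∀ k, f k < θ := fun k => hlsub ▸ lt_lsub0 f0 (g k)
  have hfcof : ∀ a < θ, ∃ k, a ≤ f k := by
    intro a ha
    rw [← hlsub, lt_lsub0_iff] at ha
    obtain ⟨i, hi⟩ := ha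
    obtain ⟨k, rfl⟩ := hg i
    exact ⟨k, hi⟩
  choose x hxE hfx hxθ using fun k => hθlp.2 (f k) (hfθ k)
  choose e heE hxe using fun k => hxE k
  -- x k = j (e k), e k ∈ E, f k < x k < θ
  have heζ : ∀ k, e k < ζ := fun k => hxlt (e k) (heE k) ((hxe k) ▸ hxθ k)
  set L : Ordinal := lsub0 (fun k : ULift ℕ => e k.down) with hLdef
  have hlsube : L = ζ := by
    refine le_antisymm (lsub0_le fun k : ULift ℕ => heζ k.down) ?_
    by_contra h
    have h1 : j L < θ := hmin _ (not_le.1 h)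
    obtain ⟨k, hk⟩ := hfcof (j L) h1
    have hLe : L < e k := by
      apply hrev _ ((not_le.1 h).trans hζlam) _ (heE k)
      rw [hxe k]
      exact lt_of_le_of_lt hk (hfx k)
    exact absurd (lt_lsub0 (fun k : ULift ℕ => e k.down) (ULift.up k))
      (not_lt.2 hLe.le)
  have hζcof : ζ.cof = Cardinal.aleph0 := by
    apply le_antisymm
    · rw [← hlsube]
      refine (cof_lsub0_le _).trans ?_
      simp [Cardinal.mk_uLift]
    · exact Ordinal.aleph0_le_cof.2 hζlim
  -- finally j ζ = θ
  have hjζ : j ζ = θ := by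
    apply le_antisymm _ hζS
    rw [hcont ζ hζlam hζcof]
    apply csSup_le
    · exact ⟨j 0, 0, hζlim.pos, rfl⟩
    · rintro y ⟨γ, hγ, rfl⟩
      exact (hmin γ hγ).le
  exact ⟨ζ, hζlam, ⟨hζlim, hub⟩, hζcof, hjζ⟩
end
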